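/- Let v ∈ ℝ^d be nonzero, q ≥ 1, r_i = |v_i|/‖v‖_q. Under stochastic quantization with lowest level ℓ_1 (where each coordinate with r_i ∈ [0, ℓ_1] is set to zero with probability 1 - r_i/ℓ_1, and coordinates with r_i ≥ ℓ_1 are always nonzero), the expected number of nonzero quantized coordinates is at most ℓ_1^{-q} + d^{1-1/q}/ℓ_1. -/

import Mathlib

/-- Let v ∈ ℝ^d be nonzero, q ≥ 1, r_i = |v_i|/‖v‖_q.  Under
stochastic quantization with lowest level ℓ₁ (each coordinate with
r_i ∈ [0, ℓ₁) is zero with probability 1 - r_i/ℓ₁, coordinates with r_i ≥ ℓ₁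
are always nonzero), the expected number of nonzero quantized coordinates,
#{i : r_i ≥ ℓ₁} + Σ_{i : r_i < ℓ₁} r_i/ℓ₁, is at most ℓ₁^{-q} + d^{1-1/q}/ℓ₁. -/
theorem stmt10 (d : ℕ) (v : Fin d → ℝ) (hv : v ≠ 0) (q l1 : ℝ) (hq : 1 ≤ q)
    (hl : 0 < l1) (hl1 : l1 ≤ 1)
    (r : Fin d → ℝ) (hr : ∀ i, r i = |v i| / (∑ j, |v j| ^ q) ^ (1 / q)) :
    ((Finset.univ.filter fun i => l1 ≤ r i).card : ℝ)
        + ∑ i ∈ Finset.univ.filter (fun i => r i < l1), r i / l1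
      ≤ l1 ^ (-q) + (d : ℝ) ^ (1 - 1 / q) / l1 := by
  have hq0 : 0 < q := lt_of_lt_of_le one_pos hq
  set S : ℝ := ∑ j, |v j| ^ q with hS
  have hSpos : 0 < S := by
    obtain ⟨i, hi⟩ := Function.ne_iff.mp hv
    refine Finset.sum_pos' (fun j _ => Real.rpow_nonneg (abs_nonneg _) _)
      ⟨i, Finset.mem_univ i, Real.rpow_pos_of_pos (abs_pos.mpr hi) _⟩
  have hrnn : ∀ i, 0 ≤ r i := fun i => by
    rw [hr i]
    exact div_nonneg (abs_nonneg _) (Real.rpow_nonneg hSpos.le _)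
  have hrq : ∀ i, r i ^ q = |v i| ^ q / S := by
    intro i
    rw [hr i, Real.div_rpow (abs_nonneg _) (Real.rpow_nonneg hSpos.le _),
      ← Real.rpow_mul hSpos.le, one_div, inv_mul_cancel₀ hq0.ne', Real.rpow_one]
  have hsum1 : ∑ i, r i ^ q = 1 := by
    simp_rw [hrq, ← Finset.sum_div, ← hS, div_self hSpos.ne']
  have hlq : 0 < l1 ^ q := Real.rpow_pos_of_pos hl q
  -- Part 1 : card bound
  have h1 : ((Finset.univ.filter fun i => l1 ≤ r i).card : ℝ) ≤ l1 ^ (-q) := by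
    rw [Real.rpow_neg hl.le, ← one_div, le_div_iff₀ hlq]
    have hb : ∀ i ∈ Finset.univ.filter fun i => l1 ≤ r i, l1 ^ q ≤ r i ^ q := by
      intro i hi
      exact Real.rpow_le_rpow hl.le (Finset.mem_filter.mp hi).2 hq0.le
    calc ((Finset.univ.filter fun i => l1 ≤ r i).card : ℝ) * l1 ^ q
        ≤ ∑ i ∈ Finset.univ.filter (fun i => l1 ≤ r i), r i ^ q := by
          simpa [nsmul_eq_mul] using Finset.card_nsmul_le_sum _ _ _ hb
      _ ≤ ∑ i, r i ^ q := Finset.sum_le_sum_of_subset_of_nonneg (Finset.filter_subset _ _)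
          (fun i _ _ => Real.rpow_nonneg (hrnn i) _)
      _ = 1 := hsum1
  -- Part 2 : sum bound
  have h2 : ∑ i ∈ Finset.univ.filter (fun i => r i < l1), r i / l1
      ≤ (d : ℝ) ^ (1 - 1 / q) / l1 := by
    rw [← Finset.sum_div, div_le_div_iff_of_pos_right hl]
    calc ∑ i ∈ Finset.univ.filter (fun i => r i < l1), r i
        ≤ ∑ i, r i := Finset.sum_le_sum_of_subset_of_nonneg (Finset.filter_subset _ _)
          (fun i _ _ => hrnn i)
      _ ≤ (d : ℝ) ^ (1 - 1 / q) := by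
          have := Real.inner_le_weight_mul_Lp_of_nonneg Finset.univ hq (fun _ => (1 : ℝ)) r
            (fun _ => zero_le_one) hrnn
          simpa [hsum1, one_div, Finset.card_univ] using this
  linarith
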